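/- Assume 1 < Q < 2. Then there exist constants 0 < C1 ≤ C2 < ∞ such that for every x ∈ ℝ³ with ρ(x) = 1: C1 ≤ ∫_{ℝ³} ds / (ρ(s)·ρ(s+x)) ≤ C2. -/

import Mathlib

open MeasureTheory Set
open scoped ENNReal

namespace Stmt7Aux

lemma fin_Ioc {T r c : ℝ} (hT : 0 ≤ T) (hr : -1 < r) :
    ∫⁻ t in Ioc (0:ℝ) T, ENNReal.ofReal (c * t ^ r) < ⊤ := by
  have h : IntegrableOn (fun t : ℝ => c * t ^ r) (Ioc 0 T) := by
    have := (intervalIntegral.intervalIntegrable_rpow' (a := 0) (b := T) hr).const_mul c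
    rw [intervalIntegrable_iff, uIoc_of_le hT] at this
    exact this
  calc ∫⁻ t in Ioc (0:ℝ) T, ENNReal.ofReal (c * t ^ r)
      ≤ ∫⁻ t in Ioc (0:ℝ) T, ‖c * t ^ r‖ₑ := lintegral_ofReal_le_lintegral_enorm _
    _ < ⊤ := h.2

lemma fin_Ioi {T r c : ℝ} (hT : 0 < T) (hr : r < -1) :
    ∫⁻ t in Ioi T, ENNReal.ofReal (c * t ^ r) < ⊤ := by
  have h : IntegrableOn (fun t : ℝ => c * t ^ r) (Ioi T) :=
    (integrableOn_Ioi_rpow_of_lt hr hT).const_mul c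
  calc ∫⁻ t in Ioi T, ENNReal.ofReal (c * t ^ r)
      ≤ ∫⁻ t in Ioi T, ‖c * t ^ r‖ₑ := lintegral_ofReal_le_lintegral_enorm _
    _ < ⊤ := h.2

variable {α : Type*} [MeasurableSpace α] {μ : Measure α} [SFinite μ]

lemma near {g : α → ℝ} {Q c b m : ℝ} (hg : Measurable g) (hg0 : ∀ a, 0 ≤ g a)
    (hQ : 1 < Q) (hb : 0 < b) (hm : 0 < m)
    (hvol : ∀ r : ℝ, 0 < r → μ {a | g a ≤ r} ≤ ENNReal.ofReal (c * r ^ Q)) :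
    ∫⁻ a, (if g a ≤ b then ENNReal.ofReal (m / g a) else 0) ∂μ < ⊤ := by
  set f : α → ℝ := fun a => if g a ≤ b then m / g a else 0 with hf
  have f_nn : ∀ a, 0 ≤ f a := by
    intro a; simp only [hf]; split_ifs
    · exact div_nonneg hm.le (hg0 a)
    · exact le_refl 0
  have f_mble : Measurable f :=
    Measurable.ite (measurableSet_le hg measurable_const)
      (measurable_const.div hg) measurable_const
  have hrw : ∀ a, (if g a ≤ b then ENNReal.ofReal (m / g a) else 0) = ENNReal.ofReal (f a) := by
    intro a; simp only [hf]; split_ifs <;> simp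
  simp_rw [hrw]
  rw [lintegral_eq_lintegral_meas_le μ (Filter.Eventually.of_forall f_nn) f_mble.aemeasurable]
  have hTpos : (0:ℝ) < m / b := div_pos hm hb
  have hsub : ∀ t : ℝ, 0 < t → {a | t ≤ f a} ⊆ {a | g a ≤ b} ∩ {a | g a ≤ m / t} := by
    intro t ht a ha
    simp only [mem_setOf_eq, hf] at ha ⊢
    by_cases hab : g a ≤ b
    · rw [if_pos hab] at ha
      have hga : 0 < g a := by
        rcases (hg0 a).lt_or_eq with h | h
        · exact h
        · exfalso; rw [← h, div_zero] at ha; linarith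
      refine ⟨hab, ?_⟩
      rw [le_div_iff₀ hga] at ha
      rw [mem_setOf_eq, le_div_iff₀ ht]
      nlinarith
    · rw [if_neg hab] at ha; linarith
  rw [← Ioc_union_Ioi_eq_Ioi hTpos.le,
    lintegral_union measurableSet_Ioi (Ioc_disjoint_Ioi le_rfl)]
  have h1 : ∫⁻ t in Ioc (0:ℝ) (m/b), μ {a | t ≤ f a} ≤
      ∫⁻ _ in Ioc (0:ℝ) (m/b), ENNReal.ofReal (c * b ^ Q) := by
    refine setLIntegral_mono' measurableSet_Ioc fun t ht => ?_
    refine le_trans (measure_mono ?_) (hvol b hb)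
    exact fun a ha => ((hsub t ht.1 ha).1)
  have h2 : ∫⁻ t in Ioi (m/b), μ {a | t ≤ f a} ≤
      ∫⁻ t in Ioi (m/b), ENNReal.ofReal ((c * m ^ Q) * t ^ (-Q)) := by
    refine setLIntegral_mono' measurableSet_Ioi fun t ht => ?_
    have htpos : (0:ℝ) < t := lt_trans hTpos ht
    refine le_trans (measure_mono fun a ha => (hsub t htpos ha).2) ?_
    refine le_trans (hvol (m/t) (div_pos hm htpos)) (le_of_eq ?_)
    congr 1
    rw [Real.div_rpow hm.le htpos.le, Real.rpow_neg htpos.le, div_eq_mul_inv]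
    ring
  calc (∫⁻ t in Ioc (0:ℝ) (m/b), μ {a | t ≤ f a}) + ∫⁻ t in Ioi (m/b), μ {a | t ≤ f a}
      ≤ (∫⁻ _ in Ioc (0:ℝ) (m/b), ENNReal.ofReal (c * b ^ Q))
        + ∫⁻ t in Ioi (m/b), ENNReal.ofReal ((c * m ^ Q) * t ^ (-Q)) := add_le_add h1 h2
    _ < ⊤ := by
        refine ENNReal.add_lt_top.mpr ⟨?_, fin_Ioi hTpos (by linarith)⟩
        rw [setLIntegral_const]
        exact ENNReal.mul_lt_top ENNReal.ofReal_lt_top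
          (by rw [Real.volume_Ioc]; exact ENNReal.ofReal_lt_top)

lemma far {g : α → ℝ} {Q c e : ℝ} (hg : Measurable g) (hg0 : ∀ a, 0 ≤ g a)
    (hQ : Q < 2) (he : 0 < e)
    (hvol : ∀ r : ℝ, 0 < r → μ {a | g a ≤ r} ≤ ENNReal.ofReal (c * r ^ Q)) :
    ∫⁻ a, (if e ≤ g a then ENNReal.ofReal (1 / g a ^ 2) else 0) ∂μ < ⊤ := by
  set f : α → ℝ := fun a => if e ≤ g a then 1 / g a ^ 2 else 0 with hf
  have f_nn : ∀ a, 0 ≤ f a := by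
    intro a; simp only [hf]; split_ifs
    · positivity
    · exact le_refl 0
  have f_mble : Measurable f :=
    Measurable.ite (measurableSet_le measurable_const hg)
      (measurable_const.div (hg.pow_const 2)) measurable_const
  have hrw : ∀ a, (if e ≤ g a then ENNReal.ofReal (1 / g a ^ 2) else 0) = ENNReal.ofReal (f a) := by
    intro a; simp only [hf]; split_ifs <;> simp
  simp_rw [hrw]
  rw [lintegral_eq_lintegral_meas_le μ (Filter.Eventually.of_forall f_nn) f_mble.aemeasurable]
  set T : ℝ := 1 / e ^ 2 with hT
  have hTpos : (0:ℝ) < T := by positivity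
  rw [← Ioc_union_Ioi_eq_Ioi hTpos.le,
    lintegral_union measurableSet_Ioi (Ioc_disjoint_Ioi le_rfl)]
  have h2 : ∫⁻ t in Ioi T, μ {a | t ≤ f a} = 0 := by
    have hz : ∀ t ∈ Ioi T, μ {a | t ≤ f a} = (0:ℝ≥0∞) := by
      intro t ht
      have : {a | t ≤ f a} = (∅ : Set α) := by
        ext a
        simp only [mem_setOf_eq, mem_empty_iff_false, iff_false, not_le, hf]
        split_ifs with hcase
        · have hga : 0 < g a := lt_of_lt_of_le he hcase
          have : 1 / g a ^ 2 ≤ T := by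
            rw [hT]
            apply div_le_div_of_nonneg_left one_pos.le (by positivity)
            exact pow_le_pow_left₀ he.le hcase 2
          exact lt_of_le_of_lt this ht
        · exact lt_trans hTpos ht
      rw [this, measure_empty]
    rw [setLIntegral_congr_fun measurableSet_Ioi hz]
    simp
  have h1 : ∫⁻ t in Ioc (0:ℝ) T, μ {a | t ≤ f a} ≤
      ∫⁻ t in Ioc (0:ℝ) T, ENNReal.ofReal (c * t ^ (-(2:ℝ)⁻¹ * Q)) := by
    refine setLIntegral_mono' measurableSet_Ioc fun t ht => ?_
    have htpos : (0:ℝ) < t := ht.1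
    have hsub : {a | t ≤ f a} ⊆ {a | g a ≤ t ^ (-(2:ℝ)⁻¹)} := by
      intro a ha
      simp only [mem_setOf_eq, hf] at ha ⊢
      by_cases hcase : e ≤ g a
      · rw [if_pos hcase] at ha
        have hga : 0 < g a := lt_of_lt_of_le he hcase
        have hsq : g a ^ 2 ≤ t⁻¹ := by
          rw [le_div_iff₀ (by positivity : (0:ℝ) < g a ^ 2)] at ha
          nlinarith [mul_le_mul_of_nonneg_left ha (inv_pos.mpr htpos).le,
            mul_inv_cancel₀ htpos.ne']
        have hrt : (t ^ (-(2:ℝ)⁻¹)) ^ 2 = t⁻¹ := by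
          rw [← Real.rpow_natCast (t ^ (-(2:ℝ)⁻¹)) 2, ← Real.rpow_mul htpos.le]
          norm_num [Real.rpow_neg_one]
        exact (pow_le_pow_iff_left₀ (hg0 a) (Real.rpow_nonneg htpos.le _) two_ne_zero).mp
          (hsq.trans_eq hrt.symm)
      · rw [if_neg hcase] at ha; exact absurd ha (not_le.mpr htpos)
    refine le_trans (measure_mono hsub) ?_
    refine le_trans (hvol _ (Real.rpow_pos_of_pos htpos _)) (le_of_eq ?_)
    congr 1
    rw [← Real.rpow_mul htpos.le]
  calc (∫⁻ t in Ioc (0:ℝ) T, μ {a | t ≤ f a}) + ∫⁻ t in Ioi T, μ {a | t ≤ f a}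
      ≤ (∫⁻ t in Ioc (0:ℝ) T, ENNReal.ofReal (c * t ^ (-(2:ℝ)⁻¹ * Q))) + 0 :=
        add_le_add h1 h2.le
    _ < ⊤ := by
        rw [add_zero]
        exact fin_Ioc hTpos.le (by nlinarith)

lemma vol_singleton (p : ℝ × ℝ × ℝ) : volume ({p} : Set (ℝ×ℝ×ℝ)) = 0 := by
  have h : ({p} : Set (ℝ×ℝ×ℝ)) ⊆ {p.1} ×ˢ (univ : Set (ℝ×ℝ)) := by
    intro q hq; simp_all [Set.mem_singleton_iff]
  refine measure_mono_null h ?_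
  rw [Measure.volume_eq_prod, Measure.prod_prod]
  simp

end Stmt7Aux

set_option maxHeartbeats 1000000 in
theorem stmt_7 (q1 q2 q3 : ℝ) (hq1 : 0 < q1) (hq2 : 0 < q2) (hq3 : 0 < q3)
    (hQlow : 1 < 1 / q1 + 1 / q2 + 1 / q3)
    (hQup : 1 / q1 + 1 / q2 + 1 / q3 < 2)
    (ρ : ℝ × ℝ × ℝ → ℝ)
    (hρ : ∀ t : ℝ × ℝ × ℝ, ρ t = |t.1| ^ q1 + |t.2.1| ^ q2 + |t.2.2| ^ q3) :
    ∃ C1 C2 : ℝ, 0 < C1 ∧ C1 ≤ C2 ∧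
      ∀ x : ℝ × ℝ × ℝ, ρ x = 1 →
        ENNReal.ofReal C1 ≤ (∫⁻ s : ℝ × ℝ × ℝ, ENNReal.ofReal (1 / (ρ s * ρ (s + x)))) ∧
        (∫⁻ s : ℝ × ℝ × ℝ, ENNReal.ofReal (1 / (ρ s * ρ (s + x)))) ≤ ENNReal.ofReal C2 := by
  classical
  haveI i2 : (volume : Measure (ℝ × ℝ)).IsAddRightInvariant := by
    rw [Measure.volume_eq_prod]; infer_instance
  haveI i3 : (volume : Measure (ℝ × ℝ × ℝ)).IsAddRightInvariant := by
    rw [Measure.volume_eq_prod]; infer_instance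
  set Q : ℝ := 1 / q1 + 1 / q2 + 1 / q3 with hQdef
  have rhoCont : Continuous ρ := by
    have h : ρ = fun t : ℝ × ℝ × ℝ => |t.1| ^ q1 + |t.2.1| ^ q2 + |t.2.2| ^ q3 := funext hρ
    rw [h]
    exact (((continuous_abs.comp continuous_fst).rpow_const fun _ => Or.inr hq1.le).add
      ((continuous_abs.comp (continuous_fst.comp continuous_snd)).rpow_const
        fun _ => Or.inr hq2.le)).add
      ((continuous_abs.comp (continuous_snd.comp continuous_snd)).rpow_const
        fun _ => Or.inr hq3.le)
  have rhoMeas : Measurable ρ := rhoCont.measurable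
  have rho0 : ∀ t, 0 ≤ ρ t := by
    intro t; rw [hρ t]
    have := Real.rpow_nonneg (abs_nonneg t.1) q1
    have := Real.rpow_nonneg (abs_nonneg t.2.1) q2
    have := Real.rpow_nonneg (abs_nonneg t.2.2) q3
    linarith
  have rhoPos : ∀ t : ℝ × ℝ × ℝ, t ≠ 0 → 0 < ρ t := by
    intro t ht
    rw [hρ t]
    have n1 := Real.rpow_nonneg (abs_nonneg t.1) q1
    have n2 := Real.rpow_nonneg (abs_nonneg t.2.1) q2
    have n3 := Real.rpow_nonneg (abs_nonneg t.2.2) q3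
    by_cases h1 : t.1 = 0
    · by_cases h2 : t.2.1 = 0
      · by_cases h3 : t.2.2 = 0
        · exact absurd (by simp [Prod.ext_iff, h1, h2, h3]) ht
        · have := Real.rpow_pos_of_pos (abs_pos.mpr h3) q3; linarith
      · have := Real.rpow_pos_of_pos (abs_pos.mpr h2) q2; linarith
    · have := Real.rpow_pos_of_pos (abs_pos.mpr h1) q1; linarith
  have rhoNeg : ∀ t : ℝ × ℝ × ℝ, ρ (-t) = ρ t := by
    intro t; rw [hρ, hρ]
    simp [Prod.fst_neg, Prod.snd_neg, abs_neg]
  have key1 : ∀ u v q : ℝ, 0 < q → |u + v| ^ q ≤ 2 ^ q * (|u| ^ q + |v| ^ q) := by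
    intro u v q hq
    have h2q : (0:ℝ) < 2 ^ q := Real.rpow_pos_of_pos two_pos q
    have h1 : |u + v| ≤ 2 * max |u| |v| := by
      refine (abs_add_le u v).trans ?_
      rcases le_total |u| |v| with h | h
      · rw [max_eq_right h]; linarith
      · rw [max_eq_left h]; linarith
    have h3 : (max |u| |v|) ^ q ≤ |u| ^ q + |v| ^ q := by
      rcases le_total |u| |v| with h | h
      · rw [max_eq_right h]
        have := Real.rpow_nonneg (abs_nonneg u) q; linarith
      · rw [max_eq_left h]
        have := Real.rpow_nonneg (abs_nonneg v) q; linarith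
    calc |u + v| ^ q ≤ (2 * max |u| |v|) ^ q :=
          Real.rpow_le_rpow (abs_nonneg _) h1 hq.le
      _ = 2 ^ q * (max |u| |v|) ^ q :=
          Real.mul_rpow (by norm_num) (le_max_of_le_left (abs_nonneg u))
      _ ≤ 2 ^ q * (|u| ^ q + |v| ^ q) := by nlinarith [h3, h2q]
  set K : ℝ := 2 ^ q1 + 2 ^ q2 + 2 ^ q3 with hKdef
  have hK : 0 < K := by
    have := Real.rpow_pos_of_pos two_pos q1
    have := Real.rpow_pos_of_pos two_pos q2
    have := Real.rpow_pos_of_pos two_pos q3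
    rw [hKdef]; linarith
  have hKne : K ≠ 0 := ne_of_gt hK
  have htri : ∀ a b : ℝ × ℝ × ℝ, ρ (a + b) ≤ K * (ρ a + ρ b) := by
    intro a b
    have e1 : |a.1| ^ q1 + |b.1| ^ q1 ≤ ρ a + ρ b := by
      rw [hρ a, hρ b]
      linarith [Real.rpow_nonneg (abs_nonneg a.2.1) q2, Real.rpow_nonneg (abs_nonneg a.2.2) q3,
        Real.rpow_nonneg (abs_nonneg b.2.1) q2, Real.rpow_nonneg (abs_nonneg b.2.2) q3]
    have e2 : |a.2.1| ^ q2 + |b.2.1| ^ q2 ≤ ρ a + ρ b := by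
      rw [hρ a, hρ b]
      linarith [Real.rpow_nonneg (abs_nonneg a.1) q1, Real.rpow_nonneg (abs_nonneg a.2.2) q3,
        Real.rpow_nonneg (abs_nonneg b.1) q1, Real.rpow_nonneg (abs_nonneg b.2.2) q3]
    have e3 : |a.2.2| ^ q3 + |b.2.2| ^ q3 ≤ ρ a + ρ b := by
      rw [hρ a, hρ b]
      linarith [Real.rpow_nonneg (abs_nonneg a.1) q1, Real.rpow_nonneg (abs_nonneg a.2.1) q2,
        Real.rpow_nonneg (abs_nonneg b.1) q1, Real.rpow_nonneg (abs_nonneg b.2.1) q2]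
    have t1 : |(a + b).1| ^ q1 ≤ 2 ^ q1 * (ρ a + ρ b) := by
      rw [Prod.fst_add]
      exact (key1 a.1 b.1 q1 hq1).trans
        (mul_le_mul_of_nonneg_left e1 (Real.rpow_nonneg (by norm_num) q1))
    have t2 : |(a + b).2.1| ^ q2 ≤ 2 ^ q2 * (ρ a + ρ b) := by
      rw [Prod.snd_add, Prod.fst_add]
      exact (key1 a.2.1 b.2.1 q2 hq2).trans
        (mul_le_mul_of_nonneg_left e2 (Real.rpow_nonneg (by norm_num) q2))
    have t3 : |(a + b).2.2| ^ q3 ≤ 2 ^ q3 * (ρ a + ρ b) := by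
      rw [Prod.snd_add, Prod.snd_add]
      exact (key1 a.2.2 b.2.2 q3 hq3).trans
        (mul_le_mul_of_nonneg_left e3 (Real.rpow_nonneg (by norm_num) q3))
    rw [hρ (a + b), hKdef, add_mul, add_mul]
    linarith
  set ε : ℝ := 1 / (4 * K) with hεdef
  have hεpos : 0 < ε := by rw [hεdef]; positivity
  have hvol : ∀ r : ℝ, 0 < r →
      volume {s : ℝ × ℝ × ℝ | ρ s ≤ r} ≤ ENNReal.ofReal (8 * r ^ Q) := by
    intro r hr
    have hsub : {s : ℝ × ℝ × ℝ | ρ s ≤ r} ⊆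
        Icc (-(r ^ (1/q1))) (r ^ (1/q1)) ×ˢ
          (Icc (-(r ^ (1/q2))) (r ^ (1/q2)) ×ˢ Icc (-(r ^ (1/q3))) (r ^ (1/q3))) := by
      intro s hs
      simp only [mem_setOf_eq] at hs
      rw [hρ s] at hs
      have n1 := Real.rpow_nonneg (abs_nonneg s.1) q1
      have n2 := Real.rpow_nonneg (abs_nonneg s.2.1) q2
      have n3 := Real.rpow_nonneg (abs_nonneg s.2.2) q3
      have b1 : |s.1| ≤ r ^ (1/q1) := by
        calc |s.1| = (|s.1| ^ q1) ^ (1/q1) := by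
              rw [one_div, Real.rpow_rpow_inv (abs_nonneg _) hq1.ne']
          _ ≤ r ^ (1/q1) := Real.rpow_le_rpow n1 (by linarith) (by positivity)
      have b2 : |s.2.1| ≤ r ^ (1/q2) := by
        calc |s.2.1| = (|s.2.1| ^ q2) ^ (1/q2) := by
              rw [one_div, Real.rpow_rpow_inv (abs_nonneg _) hq2.ne']
          _ ≤ r ^ (1/q2) := Real.rpow_le_rpow n2 (by linarith) (by positivity)
      have b3 : |s.2.2| ≤ r ^ (1/q3) := by
        calc |s.2.2| = (|s.2.2| ^ q3) ^ (1/q3) := by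
              rw [one_div, Real.rpow_rpow_inv (abs_nonneg _) hq3.ne']
          _ ≤ r ^ (1/q3) := Real.rpow_le_rpow n3 (by linarith) (by positivity)
      simp only [Set.mem_prod, Set.mem_Icc]
      exact ⟨abs_le.mp b1, abs_le.mp b2, abs_le.mp b3⟩
    refine le_trans (measure_mono hsub) ?_
    rw [Measure.volume_eq_prod, Measure.prod_prod, Measure.volume_eq_prod, Measure.prod_prod,
      Real.volume_Icc, Real.volume_Icc, Real.volume_Icc]
    have e1 : ∀ y : ℝ, y - -y = 2 * y := fun y => by ring
    rw [e1, e1, e1]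
    have heq : ENNReal.ofReal (2 * r ^ (1/q1)) *
        (ENNReal.ofReal (2 * r ^ (1/q2)) * ENNReal.ofReal (2 * r ^ (1/q3))) =
        ENNReal.ofReal (8 * r ^ Q) := by
      rw [← ENNReal.ofReal_mul (by positivity : (0:ℝ) ≤ 2 * r ^ (1/q2))]
      rw [← ENNReal.ofReal_mul (by positivity : (0:ℝ) ≤ 2 * r ^ (1/q1))]
      congr 1
      rw [hQdef, Real.rpow_add hr, Real.rpow_add hr]
      ring
    exact heq.le
  set g₁ : ℝ × ℝ × ℝ → ℝ≥0∞ :=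
    fun u => if ρ u ≤ ε then ENNReal.ofReal (2 * K / ρ u) else 0 with hg₁
  set g₂ : ℝ × ℝ × ℝ → ℝ≥0∞ :=
    fun u => if ε ≤ ρ u then ENNReal.ofReal (1 / ρ u ^ 2) else 0 with hg₂
  have meas_g₁ : Measurable g₁ := by
    rw [hg₁]
    exact Measurable.ite (measurableSet_le rhoMeas measurable_const)
      (measurable_const.div rhoMeas).ennreal_ofReal measurable_const
  have meas_g₂ : Measurable g₂ := by
    rw [hg₂]
    exact Measurable.ite (measurableSet_le measurable_const rhoMeas)
      (measurable_const.div (rhoMeas.pow_const 2)).ennreal_ofReal measurable_const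
  have N1 : ∫⁻ s, g₁ s < ⊤ := by
    rw [hg₁]
    exact Stmt7Aux.near rhoMeas rho0 hQlow hεpos (by linarith : (0:ℝ) < 2 * K) hvol
  have N2 : ∫⁻ s, g₂ s < ⊤ := by
    rw [hg₂]
    exact Stmt7Aux.far rhoMeas rho0 hQup hεpos hvol
  set M : ℝ≥0∞ := ((∫⁻ s, g₁ s) + ∫⁻ s, g₁ s) + ((∫⁻ s, g₂ s) + ∫⁻ s, g₂ s) with hM
  have hMfin : M ≠ ⊤ := by
    rw [hM]
    exact (ENNReal.add_lt_top.mpr ⟨ENNReal.add_lt_top.mpr ⟨N1, N1⟩,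
      ENNReal.add_lt_top.mpr ⟨N2, N2⟩⟩).ne
  -- the box for the lower bound
  set a₁ : ℝ := (4/3 : ℝ) ^ q1⁻¹ with ha₁
  set a₂ : ℝ := (1/3 : ℝ) ^ q2⁻¹ with ha₂
  set a₃ : ℝ := (1/3 : ℝ) ^ q3⁻¹ with ha₃
  have ha₁gt : 1 < a₁ := by
    rw [ha₁]
    exact (Real.one_lt_rpow_iff_of_pos (by norm_num)).mpr
      (Or.inl ⟨by norm_num, by positivity⟩)
  have ha₂pos : 0 < a₂ := Real.rpow_pos_of_pos (by norm_num) _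
  have ha₃pos : 0 < a₃ := Real.rpow_pos_of_pos (by norm_num) _
  set S : Set (ℝ × ℝ × ℝ) := Icc 1 a₁ ×ˢ (Icc 0 a₂ ×ˢ Icc 0 a₃) with hS
  have measS : MeasurableSet S := by
    rw [hS]
    exact measurableSet_Icc.prod (measurableSet_Icc.prod measurableSet_Icc)
  have volS : volume S =
      ENNReal.ofReal (a₁ - 1) * (ENNReal.ofReal a₂ * ENNReal.ofReal a₃) := by
    rw [hS, Measure.volume_eq_prod, Measure.prod_prod, Measure.volume_eq_prod,
      Measure.prod_prod, Real.volume_Icc, Real.volume_Icc, Real.volume_Icc,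
      sub_zero, sub_zero]
  have volSpos : 0 < volume S := by
    rw [volS]
    exact ENNReal.mul_pos (ENNReal.ofReal_pos.mpr (by linarith)).ne'
      (ENNReal.mul_pos (ENNReal.ofReal_pos.mpr ha₂pos).ne'
        (ENNReal.ofReal_pos.mpr ha₃pos).ne').ne'
  have volSfin : volume S < ⊤ := by
    rw [volS]
    exact ENNReal.mul_lt_top ENNReal.ofReal_lt_top
      (ENNReal.mul_lt_top ENNReal.ofReal_lt_top ENNReal.ofReal_lt_top)
  have hρS : ∀ s ∈ S, 1 ≤ ρ s ∧ ρ s ≤ 2 := by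
    intro s hsS
    rw [hS] at hsS
    simp only [Set.mem_prod, Set.mem_Icc] at hsS
    obtain ⟨⟨h1l, h1r⟩, ⟨h2l, h2r⟩, ⟨h3l, h3r⟩⟩ := hsS
    have habs1 : |s.1| = s.1 := abs_of_nonneg (by linarith)
    have habs2 : |s.2.1| = s.2.1 := abs_of_nonneg h2l
    have habs3 : |s.2.2| = s.2.2 := abs_of_nonneg h3l
    have p1l : 1 ≤ s.1 ^ q1 := by
      rw [← Real.one_rpow q1]
      exact Real.rpow_le_rpow zero_le_one h1l hq1.le
    have p1r : s.1 ^ q1 ≤ 4/3 := by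
      calc s.1 ^ q1 ≤ a₁ ^ q1 := Real.rpow_le_rpow (by linarith) h1r hq1.le
        _ = 4/3 := by
            rw [ha₁, ← Real.rpow_mul (by norm_num), inv_mul_cancel₀ hq1.ne', Real.rpow_one]
    have p2l : 0 ≤ s.2.1 ^ q2 := Real.rpow_nonneg h2l q2
    have p2r : s.2.1 ^ q2 ≤ 1/3 := by
      calc s.2.1 ^ q2 ≤ a₂ ^ q2 := Real.rpow_le_rpow h2l h2r hq2.le
        _ = 1/3 := by
            rw [ha₂, ← Real.rpow_mul (by norm_num), inv_mul_cancel₀ hq2.ne', Real.rpow_one]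
    have p3l : 0 ≤ s.2.2 ^ q3 := Real.rpow_nonneg h3l q3
    have p3r : s.2.2 ^ q3 ≤ 1/3 := by
      calc s.2.2 ^ q3 ≤ a₃ ^ q3 := Real.rpow_le_rpow h3l h3r hq3.le
        _ = 1/3 := by
            rw [ha₃, ← Real.rpow_mul (by norm_num), inv_mul_cancel₀ hq3.ne', Real.rpow_one]
    rw [hρ s, habs1, habs2, habs3]
    constructor <;> linarith
  set C1 : ℝ := 1 / (6 * K) * (volume S).toReal with hC1
  have hC1pos : 0 < C1 := by
    rw [hC1]
    exact mul_pos (by positivity) (ENNReal.toReal_pos volSpos.ne' volSfin.ne)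
  refine ⟨C1, max C1 M.toReal, hC1pos, le_max_left _ _, fun x hx => ?_⟩
  constructor
  · -- lower bound
    have hae : ∀ᵐ s : ℝ × ℝ × ℝ, s ∈ S →
        ENNReal.ofReal (1 / (6 * K)) ≤ ENNReal.ofReal (1 / (ρ s * ρ (s + x))) := by
      rw [ae_iff]
      refine measure_mono_null ?_ (Stmt7Aux.vol_singleton (-x))
      intro s hs
      simp only [mem_setOf_eq] at hs
      by_contra hne
      rw [mem_singleton_iff] at hne
      apply hs
      intro hsS
      have hsx0 : s + x ≠ 0 := by
        intro h
        exact hne (eq_neg_of_add_eq_zero_left h)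
      have hρ1 : 1 ≤ ρ s := (hρS s hsS).1
      have hρ2 : ρ s ≤ 2 := (hρS s hsS).2
      have hpos' : 0 < ρ (s + x) := rhoPos _ hsx0
      have hub' : ρ (s + x) ≤ 3 * K := by
        have h := htri s x
        rw [hx] at h
        nlinarith
      apply ENNReal.ofReal_le_ofReal
      rw [div_le_div_iff₀ (by positivity) (by positivity)]
      have := mul_le_mul hρ2 hub' hpos'.le (by norm_num : (0:ℝ) ≤ 2)
      linarith
    calc ENNReal.ofReal C1
        = ENNReal.ofReal (1 / (6 * K)) * volume S := by
          rw [hC1, ENNReal.ofReal_mul (by positivity), ENNReal.ofReal_toReal volSfin.ne]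
      _ = ∫⁻ _ in S, ENNReal.ofReal (1 / (6 * K)) := (setLIntegral_const S _).symm
      _ ≤ ∫⁻ s in S, ENNReal.ofReal (1 / (ρ s * ρ (s + x))) :=
          setLIntegral_mono_ae' measS hae
      _ ≤ ∫⁻ s, ENNReal.ofReal (1 / (ρ s * ρ (s + x))) := setLIntegral_le_lintegral S _
  · -- upper bound
    have ptwise : ∀ s, ENNReal.ofReal (1 / (ρ s * ρ (s + x))) ≤
        g₁ s + g₁ (s + x) + (g₂ s + g₂ (s + x)) := by
      intro s
      by_cases h0 : ρ s = 0
      · rw [h0, zero_mul]; simp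
      by_cases h0' : ρ (s + x) = 0
      · rw [h0', mul_zero]; simp
      have hs : 0 < ρ s := lt_of_le_of_ne (rho0 s) (Ne.symm h0)
      have hs' : 0 < ρ (s + x) := lt_of_le_of_ne (rho0 _) (Ne.symm h0')
      have htr1 : (1:ℝ) ≤ K * (ρ (s + x) + ρ s) := by
        have h := htri (s + x) (-s)
        have hxx : s + x + -s = x := by abel
        rw [hxx, rhoNeg s, hx] at h
        linarith
      have hKε : K * ε = 1/4 := by
        rw [hεdef]; field_simp
      by_cases hA : ρ s ≤ ε
      · have hlb : 3 / (4 * K) ≤ ρ (s + x) := by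
          have h1 : K * ρ s ≤ 1/4 := by
            calc K * ρ s ≤ K * ε := mul_le_mul_of_nonneg_left hA hK.le
              _ = 1/4 := hKε
          rw [div_le_iff₀ (by positivity)]
          nlinarith
        have hg1s : g₁ s = ENNReal.ofReal (2 * K / ρ s) := by
          rw [hg₁]; simp only [if_pos hA]
        have step : g₁ s ≤ g₁ s + g₁ (s + x) + (g₂ s + g₂ (s + x)) :=
          le_trans (le_self_add : g₁ s ≤ g₁ s + g₁ (s + x)) le_self_add
        refine le_trans ?_ step
        rw [hg1s]
        apply ENNReal.ofReal_le_ofReal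
        rw [div_le_div_iff₀ (by positivity) hs]
        have h2 : 2 * K * (ρ s * (3 / (4 * K))) ≤ 2 * K * (ρ s * ρ (s + x)) := by
          apply mul_le_mul_of_nonneg_left _ (by linarith)
          exact mul_le_mul_of_nonneg_left hlb hs.le
        have e : 2 * K * (ρ s * (3 / (4 * K))) = 3/2 * ρ s := by
          field_simp; ring
        calc 1 * ρ s = ρ s := one_mul _
          _ ≤ 3/2 * ρ s := by linarith
          _ = 2 * K * (ρ s * (3 / (4 * K))) := e.symm
          _ ≤ 2 * K * (ρ s * ρ (s + x)) := h2
      by_cases hB : ρ (s + x) ≤ ε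
      · have hlb : 3 / (4 * K) ≤ ρ s := by
          have h1 : K * ρ (s + x) ≤ 1/4 := by
            calc K * ρ (s + x) ≤ K * ε := mul_le_mul_of_nonneg_left hB hK.le
              _ = 1/4 := hKε
          rw [div_le_iff₀ (by positivity)]
          nlinarith
        have hg1x : g₁ (s + x) = ENNReal.ofReal (2 * K / ρ (s + x)) := by
          rw [hg₁]; simp only [if_pos hB]
        have step : g₁ (s + x) ≤ g₁ s + g₁ (s + x) + (g₂ s + g₂ (s + x)) :=
          le_trans (le_add_self : g₁ (s + x) ≤ g₁ s + g₁ (s + x)) le_self_add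
        refine le_trans ?_ step
        rw [hg1x]
        apply ENNReal.ofReal_le_ofReal
        rw [div_le_div_iff₀ (by positivity) hs']
        have h2 : 2 * K * (ρ (s + x) * (3 / (4 * K))) ≤ 2 * K * (ρ (s + x) * ρ s) := by
          apply mul_le_mul_of_nonneg_left _ (by linarith)
          exact mul_le_mul_of_nonneg_left hlb hs'.le
        have e : 2 * K * (ρ (s + x) * (3 / (4 * K))) = 3/2 * ρ (s + x) := by
          field_simp; ring
        calc 1 * ρ (s + x) = ρ (s + x) := one_mul _
          _ ≤ 3/2 * ρ (s + x) := by linarith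
          _ = 2 * K * (ρ (s + x) * (3 / (4 * K))) := e.symm
          _ ≤ 2 * K * (ρ (s + x) * ρ s) := h2
          _ = 2 * K * (ρ s * ρ (s + x)) := by ring
      · have hA' : ε ≤ ρ s := (not_le.mp hA).le
        have hB' : ε ≤ ρ (s + x) := (not_le.mp hB).le
        have hg2s : g₂ s = ENNReal.ofReal (1 / ρ s ^ 2) := by
          rw [hg₂]; simp only [if_pos hA']
        have hg2x : g₂ (s + x) = ENNReal.ofReal (1 / ρ (s + x) ^ 2) := by
          rw [hg₂]; simp only [if_pos hB']
        have step : g₂ s + g₂ (s + x) ≤ g₁ s + g₁ (s + x) + (g₂ s + g₂ (s + x)) :=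
          le_add_self
        refine le_trans ?_ step
        rw [hg2s, hg2x, ← ENNReal.ofReal_add (by positivity) (by positivity)]
        apply ENNReal.ofReal_le_ofReal
        rw [div_add_div _ _ (by positivity) (by positivity),
          div_le_div_iff₀ (by positivity) (by positivity)]
        nlinarith [sq_nonneg (ρ s - ρ (s + x)), mul_pos hs hs', sq_nonneg (ρ s * ρ (s + x)),
          mul_nonneg (mul_pos hs hs').le (sq_nonneg (ρ s - ρ (s + x)))]
    calc ∫⁻ s, ENNReal.ofReal (1 / (ρ s * ρ (s + x)))
        ≤ ∫⁻ s, (g₁ s + g₁ (s + x) + (g₂ s + g₂ (s + x))) := lintegral_mono ptwise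
      _ = (∫⁻ s, (g₁ s + g₁ (s + x))) + ∫⁻ s, (g₂ s + g₂ (s + x)) :=
          lintegral_add_left (meas_g₁.add (meas_g₁.comp (measurable_add_const x))) _
      _ = ((∫⁻ s, g₁ s) + ∫⁻ s, g₁ (s + x)) + ((∫⁻ s, g₂ s) + ∫⁻ s, g₂ (s + x)) := by
          rw [lintegral_add_left meas_g₁, lintegral_add_left meas_g₂]
      _ = M := by
          rw [hM, lintegral_add_right_eq_self g₁ x, lintegral_add_right_eq_self g₂ x]
      _ = ENNReal.ofReal M.toReal := (ENNReal.ofReal_toReal hMfin).symm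
      _ ≤ ENNReal.ofReal (max C1 M.toReal) :=
          ENNReal.ofReal_le_ofReal (le_max_right _ _)
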